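/- Fix integers r ≥ 1 and a function t : ℕ → ℕ with t(n)/log₂ n → ∞. Let p ∈ [0, 1/2) be fixed. For each n, let C_n ⊆ 𝔽₂^n be a set of positions 1, …, n such that every index i ∈ {1, …, n} admits t(n) pairwise disjoint subsets R^{1,i}, …, R^{t(n),i} ⊆ {1, …, n} \ {i}, each of size r. Let e ∈ 𝔽₂^n have i.i.d. Bernoulli(p) coordinates, and say that block decoding fails if there exists an index i for which at least t(n)/2 of the parities Σ_{u ∈ R^{j,i}} e_u equal 1. Then the probability of block decoding failure tends to 0 as n → ∞. -/

import Mathlib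

open Finset Filter

noncomputable def chiZ (x : ZMod 2) : ℝ := if x = 1 then -1 else 1

lemma chiZ_add (a b : ZMod 2) : chiZ (a + b) = chiZ a * chiZ b := by
  fin_cases a <;> fin_cases b <;> simp [chiZ] <;> split_ifs <;> norm_num <;> first | exact absurd ‹(0:ZMod 2) = 1› (by decide) | exact absurd rfl ‹¬(1:ZMod 2) = 1›

lemma prod_chiZ {ι : Type*} (S : Finset ι) (e : ι → ZMod 2) :
    ∏ u ∈ S, chiZ (e u) = chiZ (∑ u ∈ S, e u) := by
  induction S using Finset.cons_induction with
  | empty => simp [chiZ]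
  | cons a s ha ih => rw [Finset.prod_cons, Finset.sum_cons, chiZ_add, ih]

lemma sumZ {M : Type*} [AddCommMonoid M] (f : ZMod 2 → M) : ∑ x, f x = f 0 + f 1 :=
  Fin.sum_univ_two f

lemma exp_chi (p : ℝ) (n : ℕ) (S : Finset (Fin n)) :
    ∑ e : Fin n → ZMod 2, (∏ u, (if e u = 1 then p else 1 - p)) * ∏ u ∈ S, chiZ (e u)
      = (1 - 2*p) ^ S.card := by
  have hre : ∀ e : Fin n → ZMod 2,
      (∏ u, (if e u = 1 then p else 1 - p)) * ∏ u ∈ S, chiZ (e u)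
      = ∏ u, ((if e u = 1 then p else 1 - p) * (if u ∈ S then chiZ (e u) else 1)) := by
    intro e
    rw [Finset.prod_mul_distrib]
    congr 1
    rw [Finset.prod_ite_mem, Finset.univ_inter]
  simp_rw [hre]
  rw [show (univ : Finset (Fin n → ZMod 2)) = Fintype.piFinset (fun _ => univ) from
    (Fintype.piFinset_univ).symm, ← Finset.prod_univ_sum (t := fun _ => (univ : Finset (ZMod 2))) (f := fun (u : Fin n) (x : ZMod 2) => (if x = 1 then p else 1 - p) * (if u ∈ S then chiZ x else 1))]
  have hfac : ∀ u : Fin n,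
      (∑ x : ZMod 2, ((if x = 1 then p else 1 - p) * (if u ∈ S then chiZ x else 1)))
      = if u ∈ S then 1 - 2*p else 1 := by
    intro u
    rw [sumZ]
    by_cases hu : u ∈ S <;> simp [hu, chiZ] <;> ring
  simp_rw [hfac]
  rw [Finset.prod_ite_mem, Finset.univ_inter, Finset.prod_const]

noncomputable def qv (p : ℝ) (r : ℕ) : ℝ := (1 - 2*p)^r
noncomputable def lamv (p : ℝ) (r : ℕ) : ℝ := (2 + qv p r) / (2 - qv p r)
noncomputable def thv (p : ℝ) (r : ℕ) : ℝ :=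
  ((1 + qv p r)/2 + (lamv p r)^2 * (1 - qv p r)/2) / lamv p r

lemma qv_pos {p : ℝ} (hp1 : p < 1/2) (r : ℕ) : 0 < qv p r :=
  pow_pos (by linarith) r

lemma qv_le_one {p : ℝ} (hp0 : 0 ≤ p) (hp1 : p < 1/2) (r : ℕ) : qv p r ≤ 1 :=
  pow_le_one₀ (by linarith) (by linarith)

lemma lamv_gt_one {p : ℝ} (hp0 : 0 ≤ p) (hp1 : p < 1/2) (r : ℕ) : 1 < lamv p r := by
  have h0 := qv_pos hp1 r
  have h1 := qv_le_one hp0 hp1 r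
  rw [lamv, lt_div_iff₀ (by linarith)]
  linarith

lemma thv_pos {p : ℝ} (hp0 : 0 ≤ p) (hp1 : p < 1/2) (r : ℕ) : 0 < thv p r := by
  have h0 := qv_pos hp1 r
  have h1 := qv_le_one hp0 hp1 r
  have hl := lamv_gt_one hp0 hp1 r
  rw [thv]
  apply div_pos _ (by linarith)
  nlinarith [sq_nonneg (lamv p r)]

lemma thv_lt_one {p : ℝ} (hp0 : 0 ≤ p) (hp1 : p < 1/2) (r : ℕ) : thv p r < 1 := by
  have h0 := qv_pos hp1 r
  have h1 := qv_le_one hp0 hp1 r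
  have h2 : (0:ℝ) < 2 - qv p r := by linarith
  have hl : lamv p r * (2 - qv p r) = 2 + qv p r := by
    rw [lamv, div_mul_cancel₀ _ (ne_of_gt h2)]
  have hl1 := lamv_gt_one hp0 hp1 r
  rw [thv, div_lt_one (by linarith)]
  nlinarith [sq_nonneg (qv p r), mul_pos h0 h0]

lemma index_bound (p : ℝ) (hp0 : 0 ≤ p) (hp1 : p < 1/2) (r : ℕ)
    (n tn : ℕ) (R : Fin tn → Finset (Fin n))
    (hdisj : ∀ j j' : Fin tn, j ≠ j' → Disjoint (R j) (R j'))
    (hcard : ∀ j, (R j).card = r) :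
    ∑ e ∈ univ.filter (fun e : Fin n → ZMod 2 =>
        tn ≤ 2 * (univ.filter (fun j : Fin tn => ∑ u ∈ R j, e u = 1)).card),
      ∏ u, (if e u = 1 then p else 1 - p)
    ≤ thv p r ^ tn := by
  set q := qv p r with hqdef
  set L := lamv p r with hLdef
  have hq0 := qv_pos hp1 r
  have hq1 := qv_le_one hp0 hp1 r
  have hL1 := lamv_gt_one hp0 hp1 r
  have hL0 : (0:ℝ) < L := by linarith
  set w : (Fin n → ZMod 2) → ℝ := fun e => ∏ u, (if e u = 1 then p else 1 - p) with hwdef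
  have hw : ∀ e, 0 ≤ w e := by
    intro e
    apply Finset.prod_nonneg
    intro u _
    by_cases h : e u = 1 <;> simp [h] <;> linarith
  set g : (Fin n → ZMod 2) → ℝ :=
    fun e => ∏ j : Fin tn, (if (∑ u ∈ R j, e u) = 1 then L^2 else 1) with hgdef
  have hg0 : ∀ e, 0 ≤ g e := by
    intro e
    apply Finset.prod_nonneg
    intro j _
    by_cases h : (∑ u ∈ R j, e u) = 1 <;> simp [h] <;> positivity
  -- step 1 : on the failure event, L^tn ≤ g e
  have hstep1 : ∀ e : Fin n → ZMod 2,
      tn ≤ 2 * (univ.filter (fun j : Fin tn => ∑ u ∈ R j, e u = 1)).card →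
      L ^ tn ≤ g e := by
    intro e he
    have hge : g e = (L^2) ^ (univ.filter (fun j : Fin tn => ∑ u ∈ R j, e u = 1)).card := by
      show (∏ j : Fin tn, if (∑ u ∈ R j, e u) = 1 then L^2 else 1) = _
      rw [← Finset.prod_filter, Finset.prod_const]
    rw [hge, ← pow_mul]
    exact pow_le_pow_right₀ (le_of_lt hL1) he
  -- step 2 : the expectation of g
  set a : ℝ := (1 + L^2)/2 with hadef
  set b : ℝ := (1 - L^2)/2 with hbdef
  have hzmod : ∀ x : ZMod 2, x = 0 ∨ x = 1 := by decide
  have hgchi : ∀ e : Fin n → ZMod 2,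
      g e = ∏ j : Fin tn, (b * chiZ (∑ u ∈ R j, e u) + a) := by
    intro e
    show (∏ j : Fin tn, if (∑ u ∈ R j, e u) = 1 then L^2 else 1) = _
    apply Finset.prod_congr rfl
    intro j _
    rcases hzmod (∑ u ∈ R j, e u) with h | h <;> rw [h] <;> simp [chiZ, hadef, hbdef] <;> ring
  have hstep2 : ∑ e : Fin n → ZMod 2, w e * g e = (b * q + a) ^ tn := by
    calc ∑ e : Fin n → ZMod 2, w e * g e
        = ∑ e : Fin n → ZMod 2, ∑ U ∈ (univ : Finset (Fin tn)).powerset,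
            (w e * ∏ u ∈ U.biUnion R, chiZ (e u)) * (b ^ U.card * a ^ ((univ : Finset (Fin tn)) \ U).card) := by
          apply Finset.sum_congr rfl
          intro e _
          rw [hgchi, Finset.prod_add, Finset.mul_sum]
          apply Finset.sum_congr rfl
          intro U hU
          have hbi : ∏ u ∈ U.biUnion R, chiZ (e u) = ∏ j ∈ U, chiZ (∑ u ∈ R j, e u) := by
            rw [Finset.prod_biUnion]
            · exact Finset.prod_congr rfl fun j _ => prod_chiZ (R j) e
            · intro j _ j' _ hjj'
              exact hdisj j j' hjj'
          rw [hbi, Finset.prod_mul_distrib, Finset.prod_const, Finset.prod_const]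
          ring
      _ = ∑ U ∈ (univ : Finset (Fin tn)).powerset,
            (∑ e : Fin n → ZMod 2, w e * ∏ u ∈ U.biUnion R, chiZ (e u))
              * (b ^ U.card * a ^ ((univ : Finset (Fin tn)) \ U).card) := by
          rw [Finset.sum_comm]
          exact Finset.sum_congr rfl fun U _ => (Finset.sum_mul _ _ _).symm
      _ = ∑ U ∈ (univ : Finset (Fin tn)).powerset,
            (b * q) ^ U.card * a ^ ((univ : Finset (Fin tn)) \ U).card := by
          apply Finset.sum_congr rfl
          intro U _
          have hc : (U.biUnion R).card = r * U.card := by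
            rw [Finset.card_biUnion (fun j _ j' _ hjj' => hdisj j j' hjj')]
            simp [hcard, mul_comm]
          rw [exp_chi p n (U.biUnion R), hc, pow_mul]
          have : (1 - 2*p)^r = q := rfl
          rw [this, mul_pow]
          ring
      _ = ∏ _j : Fin tn, (b * q + a) := by
          rw [Finset.prod_add]
          exact Finset.sum_congr rfl fun U _ => by
            rw [Finset.prod_const, Finset.prod_const]
      _ = (b * q + a) ^ tn := by
          rw [Finset.prod_const, Finset.card_univ, Fintype.card_fin]
  -- step 3 : combine
  have key : (∑ e ∈ univ.filter (fun e : Fin n → ZMod 2 =>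
        tn ≤ 2 * (univ.filter (fun j : Fin tn => ∑ u ∈ R j, e u = 1)).card), w e) * L ^ tn
      ≤ (b * q + a) ^ tn := by
    rw [Finset.sum_mul]
    calc ∑ e ∈ univ.filter (fun e : Fin n → ZMod 2 =>
            tn ≤ 2 * (univ.filter (fun j : Fin tn => ∑ u ∈ R j, e u = 1)).card), w e * L ^ tn
        ≤ ∑ e ∈ univ.filter (fun e : Fin n → ZMod 2 =>
            tn ≤ 2 * (univ.filter (fun j : Fin tn => ∑ u ∈ R j, e u = 1)).card), w e * g e := by
          apply Finset.sum_le_sum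
          intro e he
          exact mul_le_mul_of_nonneg_left (hstep1 e (Finset.mem_filter.mp he).2) (hw e)
      _ ≤ ∑ e : Fin n → ZMod 2, w e * g e :=
          Finset.sum_le_sum_of_subset_of_nonneg (Finset.filter_subset _ _)
            (fun e _ _ => mul_nonneg (hw e) (hg0 e))
      _ = (b * q + a) ^ tn := hstep2
  have hth : thv p r = (b * q + a) / L := by
    rw [thv, hadef, hbdef, hqdef, hLdef]
    ring
  rw [hth, div_pow, le_div_iff₀ (pow_pos hL0 tn)]
  exact key


lemma union_bound {α ι : Type*} [Fintype α] [Fintype ι] (P : ι → α → Prop)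
    [DecidablePred fun a => ∃ i, P i a] [∀ i, DecidablePred (P i)]
    (w : α → ℝ) (hw : ∀ x, 0 ≤ w x) :
    ∑ x ∈ univ.filter (fun x => ∃ i, P i x), w x
      ≤ ∑ i : ι, ∑ x ∈ univ.filter (P i), w x := by
  simp_rw [Finset.sum_filter]
  rw [Finset.sum_comm]
  apply Finset.sum_le_sum
  intro x _
  have hnn : ∀ j : ι, 0 ≤ (if P j x then w x else 0) := by
    intro j
    by_cases hj : P j x
    · simpa [hj] using hw x
    · simp [hj]
  by_cases h : ∃ i, P i x
  · obtain ⟨i, hi⟩ := h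
    rw [if_pos ⟨i, hi⟩]
    calc w x = (if P i x then w x else 0) := by rw [if_pos hi]
      _ ≤ ∑ i : ι, (if P i x then w x else 0) :=
        Finset.single_le_sum (fun j _ => hnn j) (mem_univ i)
  · rw [if_neg h]
    exact Finset.sum_nonneg fun j _ => hnn j

lemma tendsto_aux (θ : ℝ) (hθ0 : 0 < θ) (hθ1 : θ < 1) (t : ℕ → ℕ)
    (ht : Tendsto (fun n : ℕ => (t n : ℝ) / Real.logb 2 n) atTop atTop) :
    Tendsto (fun n : ℕ => (n : ℝ) * θ ^ (t n)) atTop (nhds 0) := by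
  have hlogθ : Real.log θ < 0 := Real.log_neg hθ0 hθ1
  have hlog2 : (0:ℝ) < Real.log 2 := Real.log_pos (by norm_num)
  have h1 : Tendsto (fun n : ℕ => (t n : ℝ) / Real.log n) atTop atTop := by
    have h := ht.atTop_mul_const (inv_pos.mpr hlog2)
    apply h.congr
    intro n
    have h2 : Real.log 2 * (Real.log 2)⁻¹ = 1 := mul_inv_cancel₀ (ne_of_gt hlog2)
    rw [Real.logb, div_div_eq_mul_div, div_eq_mul_inv, div_eq_mul_inv]
    calc (t n : ℝ) * Real.log 2 * (Real.log (n:ℝ))⁻¹ * (Real.log 2)⁻¹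
        = (t n : ℝ) * (Real.log (n:ℝ))⁻¹ * (Real.log 2 * (Real.log 2)⁻¹) := by ring
      _ = (t n : ℝ) * (Real.log (n:ℝ))⁻¹ := by rw [h2, mul_one]
  have hinner : Tendsto (fun n : ℕ => 1 + ((t n : ℝ) / Real.log n) * Real.log θ) atTop atBot := by
    apply tendsto_atBot_add_const_left
    exact h1.atTop_mul_const_of_neg hlogθ
  have hlogn : Tendsto (fun n : ℕ => Real.log n) atTop atTop :=
    Real.tendsto_log_atTop.comp tendsto_natCast_atTop_atTop
  have h2 : Tendsto (fun n : ℕ =>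
      Real.log n * (1 + ((t n : ℝ) / Real.log n) * Real.log θ)) atTop atBot :=
    hlogn.atTop_mul_atBot₀ hinner
  have h3 : Tendsto (fun n : ℕ =>
      Real.exp (Real.log n * (1 + ((t n : ℝ) / Real.log n) * Real.log θ))) atTop (nhds 0) :=
    Real.tendsto_exp_atBot.comp h2
  apply h3.congr'
  filter_upwards [eventually_ge_atTop 2] with n hn
  have hn0 : (0:ℝ) < n := by positivity
  have hlogn0 : Real.log n ≠ 0 :=
    ne_of_gt (Real.log_pos (by exact_mod_cast by omega))
  have hexpand : Real.log n * (1 + ((t n : ℝ) / Real.log n) * Real.log θ)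
      = Real.log n + (t n : ℝ) * Real.log θ := by
    field_simp
  rw [hexpand, Real.exp_add, Real.exp_log hn0, Real.exp_nat_mul, Real.exp_log hθ0]



/-- **MLD block-decoding success for LRCs on the BSC (Theorem 2 of the paper).**
Fix an integer `r ≥ 1` and an availability function `t : ℕ → ℕ` with
`t n / log₂ n → ∞`, and a fixed bit-flip probability `p ∈ [0, 1/2)`.  Suppose for
each blocklength `n` every index `i ∈ {1,…,n}` admits `t n` pairwise disjoint
recovery sets of size `r` in `{1,…,n} \ {i}`.  Let the error vector
`e ∈ 𝔽₂^n` have i.i.d. Bernoulli(`p`) coordinates, and say block decoding fails if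
some index `i` has at least `t n / 2` recovery sets of odd error parity.  Then the
probability of block decoding failure tends to `0` as `n → ∞`. -/
theorem mld_block_failure_tendsto_zero_bsc
    (r : ℕ) (hr : 1 ≤ r) (t : ℕ → ℕ)
    (ht : Tendsto (fun n : ℕ => (t n : ℝ) / Real.logb 2 n) atTop atTop)
    (p : ℝ) (hp0 : 0 ≤ p) (hp1 : p < 1 / 2)
    (R : (n : ℕ) → Fin n → Fin (t n) → Finset (Fin n))
    (hdisj : ∀ n (i : Fin n) (j j' : Fin (t n)), j ≠ j' → Disjoint (R n i j) (R n i j'))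
    (hnoti : ∀ n (i : Fin n) (j : Fin (t n)), i ∉ R n i j)
    (hcard : ∀ n (i : Fin n) (j : Fin (t n)), (R n i j).card = r) :
    Tendsto
      (fun n : ℕ =>
        ∑ e ∈ univ.filter
          (fun e : Fin n → ZMod 2 =>
            ∃ i : Fin n,
              t n ≤ 2 * (univ.filter (fun j : Fin (t n) => ∑ u ∈ R n i j, e u = 1)).card),
          ∏ u, (if e u = 1 then p else 1 - p))
      atTop (nhds 0) := by
  have hw : ∀ n (e : Fin n → ZMod 2), (0:ℝ) ≤ ∏ u, (if e u = 1 then p else 1 - p) := by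
    intro n e
    apply Finset.prod_nonneg
    intro u _
    by_cases h : e u = 1 <;> simp [h] <;> linarith
  apply squeeze_zero (g := fun n : ℕ => (n : ℝ) * thv p r ^ t n)
  · intro n
    exact Finset.sum_nonneg fun e _ => hw n e
  · intro n
    calc ∑ e ∈ univ.filter
          (fun e : Fin n → ZMod 2 =>
            ∃ i : Fin n,
              t n ≤ 2 * (univ.filter (fun j : Fin (t n) => ∑ u ∈ R n i j, e u = 1)).card),
          ∏ u, (if e u = 1 then p else 1 - p)
        ≤ ∑ i : Fin n, ∑ e ∈ univ.filter
            (fun e : Fin n → ZMod 2 =>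
              t n ≤ 2 * (univ.filter (fun j : Fin (t n) => ∑ u ∈ R n i j, e u = 1)).card),
            ∏ u, (if e u = 1 then p else 1 - p) :=
          union_bound _ _ (hw n)
      _ ≤ ∑ _i : Fin n, thv p r ^ t n :=
          Finset.sum_le_sum fun i _ =>
            index_bound p hp0 hp1 r n (t n) (R n i) (hdisj n i) (hcard n i)
      _ = (n : ℝ) * thv p r ^ t n := by
          rw [Finset.sum_const, Finset.card_univ, Fintype.card_fin, nsmul_eq_mul]
  · exact tendsto_aux (thv p r) (thv_pos hp0 hp1 r) (thv_lt_one hp0 hp1 r) t ht
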